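/- (Hoeffding for sampling without replacement) Let y_1, ..., y_T be real numbers in [0,1] with mean μ = (1/T)·Σ_t y_t, and let S be a uniformly random subset of {y_1, ..., y_T} of size s. Then for any λ > 0, P(|(1/s)·Σ_{y ∈ S} y − μ| ≥ λ) ≤ 2·exp(−s·λ²). -/

import Mathlib

lemma hoeff_aux (p : ℝ) (hp0 : 0 < p) (hp1 : p < 1) (u : ℝ) :
    Real.log (1 - p + p * Real.exp u) - p * u ≤ u ^ 2 / 8 := by
  have key : ∀ c : ℝ, 0 < c → c + p = 1 →
      0 ≤ u ^ 2 / 8 + p * u - Real.log (c + p * Real.exp u) := by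
    intro c hcpos hcp
    have hpos : ∀ x : ℝ, 0 < c + p * Real.exp x := fun x => by positivity
    set g : ℝ → ℝ := fun x => x ^ 2 / 8 + p * x - Real.log (c + p * Real.exp x) with hgdef
    set g1 : ℝ → ℝ := fun x => x / 4 + p - p * Real.exp x / (c + p * Real.exp x) with hg1def
    set g2 : ℝ → ℝ := fun x => 1 / 4 - c * (p * Real.exp x) / (c + p * Real.exp x) ^ 2 with hg2def
    have hinner : ∀ x : ℝ, HasDerivAt (fun x => c + p * Real.exp x) (p * Real.exp x) x := by
      intro x
      exact ((Real.hasDerivAt_exp x).const_mul p).const_add c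
    have hg : ∀ x : ℝ, HasDerivAt g (g1 x) x := by
      intro x
      have h1 : HasDerivAt (fun x : ℝ => x ^ 2 / 8 + p * x)
          ((2 * x ^ 1) / 8 + p * 1) x :=
        ((hasDerivAt_pow 2 x).div_const 8).add ((hasDerivAt_id' (𝕜 := ℝ) x).const_mul p)
      have h2 : HasDerivAt (fun x => Real.log (c + p * Real.exp x))
          ((p * Real.exp x) / (c + p * Real.exp x)) x :=
        (hinner x).log (hpos x).ne'
      have := h1.fun_sub h2
      refine this.congr_deriv ?_
      simp only [hg1def]
      ring
    have hg1 : ∀ x : ℝ, HasDerivAt g1 (g2 x) x := by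
      intro x
      have h2 : HasDerivAt (fun x => p * Real.exp x / (c + p * Real.exp x))
          (((p * Real.exp x) * (c + p * Real.exp x) - (p * Real.exp x) * (p * Real.exp x))
            / (c + p * Real.exp x) ^ 2) x :=
        ((Real.hasDerivAt_exp x).const_mul p).div (hinner x) (hpos x).ne'
      have h1 : HasDerivAt (fun x : ℝ => x / 4 + p) (1 / 4) x := by
        simpa using ((hasDerivAt_id' (𝕜 := ℝ) x).div_const 4).add_const p
      have := h1.fun_sub h2
      refine this.congr_deriv ?_
      have h3 := (hpos x).ne'
      rw [hg2def]
      field_simp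
      ring
    have hg2 : ∀ x : ℝ, 0 ≤ g2 x := by
      intro x
      have h := hpos x
      have hq : 0 < p * Real.exp x := by positivity
      rw [hg2def, sub_nonneg, div_le_iff₀ (by positivity)]
      nlinarith [sq_nonneg (c - p * Real.exp x)]
    have hmono : Monotone g1 := monotone_of_hasDerivAt_nonneg hg1 hg2
    have hg10 : g1 0 = 0 := by
      rw [hg1def]
      simp only [Real.exp_zero, mul_one, hcp]
      norm_num
    have hg0 : g 0 = 0 := by
      rw [hgdef]
      simp only [Real.exp_zero, mul_one, hcp]
      norm_num
    have hcont : ContinuousOn g Set.univ :=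
      (continuous_iff_continuousAt.2 fun x => (hg x).continuousAt).continuousOn
    have hres : 0 ≤ g u := by
      rcases le_total 0 u with h | h
      · have hm : MonotoneOn g (Set.Ici 0) := by
          refine monotoneOn_of_hasDerivWithinAt_nonneg (convex_Ici 0)
            (hcont.mono (Set.subset_univ _)) (fun x _ => (hg x).hasDerivWithinAt) ?_
          intro x hx
          rw [interior_Ici] at hx
          have := hmono (le_of_lt hx)
          rw [hg10] at this
          linarith
        have := hm (Set.self_mem_Ici) (Set.mem_Ici.2 h) h
        linarith [hg0]
      · have hm : AntitoneOn g (Set.Iic 0) := by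
          refine antitoneOn_of_hasDerivWithinAt_nonpos (convex_Iic 0)
            (hcont.mono (Set.subset_univ _)) (fun x _ => (hg x).hasDerivWithinAt) ?_
          intro x hx
          rw [interior_Iic] at hx
          have := hmono (le_of_lt hx)
          rw [hg10] at this
          linarith
        have := hm (Set.mem_Iic.2 h) (Set.self_mem_Iic) h
        linarith [hg0]
      
    rw [hgdef] at hres
    exact hres
  have := key (1 - p) (by linarith) (by ring)
  linarith

lemma hoeff_fn (p u : ℝ) (hp0 : 0 ≤ p) (hp1 : p ≤ 1) :
    (1 - p) * Real.exp (-(p * u)) + p * Real.exp ((1 - p) * u) ≤ Real.exp (u ^ 2 / 8) := by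
  rcases eq_or_lt_of_le hp0 with h0 | h0
  · simp only [← h0]
    norm_num
    positivity
  rcases eq_or_lt_of_le hp1 with h1 | h1
  · simp only [h1]
    norm_num
    positivity
  have hpos : 0 < 1 - p + p * Real.exp u := by
    have := Real.exp_pos u
    nlinarith
  have hrw : (1 - p) * Real.exp (-(p * u)) + p * Real.exp ((1 - p) * u)
      = Real.exp (Real.log (1 - p + p * Real.exp u) - p * u) := by
    rw [Real.exp_sub, Real.exp_log hpos]
    have h2 : Real.exp ((1 - p) * u) = Real.exp u * Real.exp (-(p * u)) := by
      rw [← Real.exp_add]; ring_nf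
    rw [h2, Real.exp_neg]
    have h3 := (Real.exp_pos (p * u)).ne'
    field_simp
    try ring
  rw [hrw]
  exact Real.exp_le_exp.2 (hoeff_aux p h0 h1 u)



lemma avg_mgf {T : ℕ} (y : Fin T → ℝ) (hy : ∀ i, y i ∈ Set.Icc (0:ℝ) 1)
    (A : Finset (Fin T)) (hA : A.Nonempty) (v : ℝ) :
    ∑ i ∈ A, Real.exp (v * (y i - (∑ j ∈ A, y j) / (A.card : ℝ)))
      ≤ (A.card : ℝ) * Real.exp (v ^ 2 / 8) := by
  set n : ℝ := (A.card : ℝ) with hn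
  have hnpos : (0:ℝ) < n := by
    rw [hn]; exact_mod_cast Finset.card_pos.2 hA
  set p : ℝ := (∑ j ∈ A, y j) / n with hp
  have hsum : ∑ j ∈ A, y j = n * p := by
    rw [hp]; field_simp
  have hp0 : 0 ≤ p := div_nonneg (Finset.sum_nonneg fun i _ => (hy i).1) hnpos.le
  have hp1 : p ≤ 1 := by
    rw [hp, div_le_one hnpos]
    calc ∑ j ∈ A, y j ≤ ∑ _j ∈ A, (1:ℝ) := Finset.sum_le_sum fun i _ => (hy i).2
    _ = n := by simp [hn]
  have hpt : ∀ i ∈ A, Real.exp (v * (y i - p)) ≤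
      (1 - y i) * Real.exp (-(p * v)) + y i * Real.exp ((1 - p) * v) := by
    intro i _
    have h1 := (hy i).1
    have h2 := (hy i).2
    have hcv := convexOn_exp.2 (Set.mem_univ (-(p*v))) (Set.mem_univ ((1-p)*v))
      (by linarith : (0:ℝ) ≤ 1 - y i) h1 (by ring)
    simp only [smul_eq_mul] at hcv
    have harg : v * (y i - p) = (1 - y i) * (-(p*v)) + y i * ((1-p)*v) := by ring
    rw [harg]
    exact hcv
  calc ∑ i ∈ A, Real.exp (v * (y i - p))
      ≤ ∑ i ∈ A, ((1 - y i) * Real.exp (-(p * v)) + y i * Real.exp ((1 - p) * v)) :=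
        Finset.sum_le_sum hpt
    _ = (n - n*p) * Real.exp (-(p * v)) + (n*p) * Real.exp ((1 - p) * v) := by
        rw [Finset.sum_add_distrib, ← Finset.sum_mul, ← Finset.sum_mul, Finset.sum_sub_distrib,
          hsum]
        simp [hn]
    _ = n * ((1 - p) * Real.exp (-(p * v)) + p * Real.exp ((1 - p) * v)) := by ring
    _ ≤ n * Real.exp (v ^ 2 / 8) :=
        mul_le_mul_of_nonneg_left (hoeff_fn p v hp0 hp1) hnpos.le

lemma count_id {α : Type*} [DecidableEq α] (A : Finset α) (s : ℕ) (f : Finset α → ℝ) :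
    ∑ i ∈ A, ∑ S ∈ (A.erase i).powersetCard s, f (insert i S)
      = (s + 1 : ℝ) * ∑ S ∈ A.powersetCard (s+1), f S := by
  have hr : (s+1:ℝ) * ∑ S ∈ A.powersetCard (s+1), f S
      = ∑ S ∈ A.powersetCard (s+1), ∑ _i ∈ S, f S := by
    rw [Finset.mul_sum]
    refine Finset.sum_congr rfl ?_
    intro S hS
    rw [Finset.sum_const, nsmul_eq_mul, (Finset.mem_powersetCard.mp hS).2]
    push_cast; ring
  rw [hr, Finset.sum_sigma', Finset.sum_sigma']
  refine Finset.sum_nbij' (fun x => ⟨insert x.1 x.2, x.1⟩) (fun x => ⟨x.2, x.1.erase x.2⟩)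
    ?_ ?_ ?_ ?_ ?_
  · rintro ⟨i, S⟩ hx
    rw [Finset.mem_sigma] at hx
    obtain ⟨hi, hS⟩ := hx
    rw [Finset.mem_powersetCard] at hS
    have hiS : i ∉ S := fun h => (Finset.mem_erase.mp (hS.1 h)).1 rfl
    rw [Finset.mem_sigma]
    constructor
    · rw [Finset.mem_powersetCard]
      refine ⟨Finset.insert_subset hi (hS.1.trans (Finset.erase_subset i A)), ?_⟩
      rw [Finset.card_insert_of_notMem hiS, hS.2]
    · exact Finset.mem_insert_self i S
  · rintro ⟨S, i⟩ hx
    rw [Finset.mem_sigma] at hx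
    obtain ⟨hS, hi⟩ := hx
    rw [Finset.mem_powersetCard] at hS
    rw [Finset.mem_sigma]
    refine ⟨hS.1 hi, ?_⟩
    rw [Finset.mem_powersetCard]
    refine ⟨Finset.erase_subset_erase i hS.1, ?_⟩
    rw [Finset.card_erase_of_mem hi, hS.2]
    omega
  · rintro ⟨i, S⟩ hx
    rw [Finset.mem_sigma] at hx
    obtain ⟨hi, hS⟩ := hx
    rw [Finset.mem_powersetCard] at hS
    have hiS : i ∉ S := fun h => (Finset.mem_erase.mp (hS.1 h)).1 rfl
    simp [Finset.erase_insert hiS]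
  · rintro ⟨S, i⟩ hx
    rw [Finset.mem_sigma] at hx
    simp [Finset.insert_erase hx.2]
  · rintro ⟨i, S⟩ _
    rfl



lemma mgf_induct {T : ℕ} (y : Fin T → ℝ) (hy : ∀ i, y i ∈ Set.Icc (0:ℝ) 1) (u : ℝ) :
    ∀ (s : ℕ) (A : Finset (Fin T)), s ≤ A.card →
      ∑ S ∈ A.powersetCard s,
          Real.exp (u * ((∑ i ∈ S, y i) - (s:ℝ) * ((∑ j ∈ A, y j) / (A.card:ℝ))))
        ≤ (A.card.choose s : ℝ) * Real.exp ((s:ℝ) * (u^2/8)) := by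
  intro s
  induction s with
  | zero =>
    intro A _
    simp
  | succ s ih =>
    intro A hcard
    have hApos : 0 < A.card := lt_of_lt_of_le (Nat.succ_pos s) hcard
    rcases Nat.lt_or_ge A.card 2 with h2 | h2
    · -- A.card = 1, s = 0
      have h1 : A.card = 1 := by omega
      have hs0 : s = 0 := by omega
      subst hs0
      obtain ⟨i, hA⟩ := Finset.card_eq_one.mp h1
      subst hA
      have hpc : (Finset.powersetCard 1 ({i} : Finset (Fin T))) = {{i}} := by
        have := Finset.powersetCard_self ({i} : Finset (Fin T))
        simpa using this
      rw [show (0:ℕ)+1 = 1 from rfl, hpc]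
      simp only [Finset.sum_singleton, Finset.card_singleton]
      norm_num
      positivity
    · -- main case
      set n : ℝ := (A.card : ℝ) with hn
      have hn2 : (2:ℝ) ≤ n := by rw [hn]; exact_mod_cast h2
      have hne : n ≠ 0 := by linarith
      have hne1 : n - 1 ≠ 0 := by linarith
      have hsle : (s:ℝ) ≤ n - 1 := by
        have : (s:ℕ) + 1 ≤ A.card := hcard
        have := (Nat.cast_le (α := ℝ)).2 this
        push_cast at this
        linarith
      set μ : ℝ := (∑ j ∈ A, y j) / n with hμ
      set c : ℝ := u * (1 - (s:ℝ)/(n-1)) with hc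
      set K : ℝ := ((A.card - 1).choose s : ℝ) * Real.exp ((s:ℝ)*(u^2/8)) with hK
      have hKpos : 0 < K := by
        rw [hK]
        have : 0 < (A.card - 1).choose s := Nat.choose_pos (by omega)
        positivity
      have hplus : (0:ℝ) < (s:ℝ) + 1 := by positivity
      have key := count_id A s
        (fun S => Real.exp (u * ((∑ i ∈ S, y i) - ((s:ℝ)+1) * μ)))
      have hstep : ∀ i ∈ A,
          ∑ S ∈ (A.erase i).powersetCard s,
            Real.exp (u * ((∑ j ∈ insert i S, y j) - ((s:ℝ)+1) * μ))
          ≤ Real.exp (c * (y i - μ)) * K := by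
        intro i hi
        have hec : ((A.erase i).card : ℝ) = n - 1 := by
          rw [Finset.card_erase_of_mem hi]
          rw [hn]
          push_cast [Nat.cast_sub (by omega : 1 ≤ A.card)]
          ring
        have hes : ∑ j ∈ A.erase i, y j = (∑ j ∈ A, y j) - y i := by
          have := Finset.sum_erase_add A y hi
          linarith
        have hterm : ∀ S ∈ (A.erase i).powersetCard s,
            Real.exp (u * ((∑ j ∈ insert i S, y j) - ((s:ℝ)+1) * μ))
            = Real.exp (c * (y i - μ)) *
              Real.exp (u * ((∑ j ∈ S, y j)
                - (s:ℝ) * ((∑ j ∈ A.erase i, y j) / ((A.erase i).card : ℝ)))) := by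
          intro S hS
          rw [Finset.mem_powersetCard] at hS
          have hiS : i ∉ S := fun h => (Finset.mem_erase.mp (hS.1 h)).1 rfl
          rw [Finset.sum_insert hiS, ← Real.exp_add]
          congr 1
          rw [hec, hes, hμ, hc]
          field_simp
          ring
        calc ∑ S ∈ (A.erase i).powersetCard s,
              Real.exp (u * ((∑ j ∈ insert i S, y j) - ((s:ℝ)+1) * μ))
            = ∑ S ∈ (A.erase i).powersetCard s,
              Real.exp (c * (y i - μ)) *
              Real.exp (u * ((∑ j ∈ S, y j)
                - (s:ℝ) * ((∑ j ∈ A.erase i, y j) / ((A.erase i).card : ℝ)))) :=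
              Finset.sum_congr rfl hterm
          _ = Real.exp (c * (y i - μ)) * ∑ S ∈ (A.erase i).powersetCard s,
              Real.exp (u * ((∑ j ∈ S, y j)
                - (s:ℝ) * ((∑ j ∈ A.erase i, y j) / ((A.erase i).card : ℝ)))) := by
              rw [Finset.mul_sum]
          _ ≤ Real.exp (c * (y i - μ)) * K := by
              apply mul_le_mul_of_nonneg_left _ (Real.exp_pos _).le
              have hcard' : s ≤ (A.erase i).card := by
                rw [Finset.card_erase_of_mem hi]; omega
              have := ih (A.erase i) hcard'
              rw [hK]
              calc ∑ S ∈ (A.erase i).powersetCard s,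
                    Real.exp (u * ((∑ j ∈ S, y j)
                      - (s:ℝ) * ((∑ j ∈ A.erase i, y j) / ((A.erase i).card : ℝ))))
                  ≤ ((A.erase i).card.choose s : ℝ) * Real.exp ((s:ℝ)*(u^2/8)) := this
                _ = ((A.card - 1).choose s : ℝ) * Real.exp ((s:ℝ)*(u^2/8)) := by
                    rw [Finset.card_erase_of_mem hi]
      have havg : ∑ i ∈ A, Real.exp (c * (y i - μ)) ≤ n * Real.exp (u^2/8) := by
        have h1 := avg_mgf y hy A (Finset.card_pos.mp hApos) c
        have hc2 : c^2/8 ≤ u^2/8 := by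
          rw [hc]
          have ht0 : 0 ≤ (s:ℝ)/(n-1) := div_nonneg (Nat.cast_nonneg s) (by linarith)
          have ht1 : (s:ℝ)/(n-1) ≤ 1 := by
            rw [div_le_one (by linarith)]
            exact hsle
          nlinarith [sq_nonneg u, sq_nonneg (u * ((s:ℝ)/(n-1)))]
        calc ∑ i ∈ A, Real.exp (c * (y i - μ))
            ≤ n * Real.exp (c^2/8) := h1
          _ ≤ n * Real.exp (u^2/8) := by
              apply mul_le_mul_of_nonneg_left (Real.exp_le_exp.2 hc2) (by linarith)
      -- combine
      have hmain : ((s:ℝ)+1) * ∑ S ∈ A.powersetCard (s+1),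
          Real.exp (u * ((∑ i ∈ S, y i) - ((s:ℝ)+1) * μ))
          ≤ n * ((A.card - 1).choose s : ℝ) * Real.exp (((s:ℝ)+1)*(u^2/8)) := by
        rw [← key]
        calc ∑ i ∈ A, ∑ S ∈ (A.erase i).powersetCard s,
              Real.exp (u * ((∑ j ∈ insert i S, y j) - ((s:ℝ)+1) * μ))
            ≤ ∑ i ∈ A, Real.exp (c * (y i - μ)) * K := Finset.sum_le_sum hstep
          _ = K * ∑ i ∈ A, Real.exp (c * (y i - μ)) := by
              rw [Finset.mul_sum]; exact Finset.sum_congr rfl fun i _ => mul_comm _ _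
          _ ≤ K * (n * Real.exp (u^2/8)) := mul_le_mul_of_nonneg_left havg hKpos.le
          _ = n * ((A.card - 1).choose s : ℝ) * Real.exp (((s:ℝ)+1)*(u^2/8)) := by
              have hE : Real.exp (((s:ℝ)+1)*(u^2/8))
                  = Real.exp ((s:ℝ)*(u^2/8)) * Real.exp (u^2/8) := by
                rw [← Real.exp_add]; ring_nf
              rw [hK, hE]; ring
      have hnat : (A.card : ℝ) * ((A.card - 1).choose s : ℝ)
          = ((s:ℝ)+1) * (A.card.choose (s+1) : ℝ) := by
        have h := Nat.add_one_mul_choose_eq (A.card - 1) s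
        rw [Nat.sub_add_cancel (by omega : 1 ≤ A.card)] at h
        have : A.card * (A.card - 1).choose s = (s+1) * A.card.choose (s+1) :=
          h.trans (Nat.mul_comm _ _)
        exact_mod_cast this
      have hgoal : ((s:ℝ)+1) * ∑ S ∈ A.powersetCard (s+1),
          Real.exp (u * ((∑ i ∈ S, y i) - ((s:ℝ)+1) * μ))
          ≤ ((s:ℝ)+1) * ((A.card.choose (s+1) : ℝ) * Real.exp (((s:ℝ)+1)*(u^2/8))) := by
        calc ((s:ℝ)+1) * ∑ S ∈ A.powersetCard (s+1),
            Real.exp (u * ((∑ i ∈ S, y i) - ((s:ℝ)+1) * μ))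
            ≤ n * ((A.card - 1).choose s : ℝ) * Real.exp (((s:ℝ)+1)*(u^2/8)) := hmain
          _ = ((s:ℝ)+1) * ((A.card.choose (s+1) : ℝ) * Real.exp (((s:ℝ)+1)*(u^2/8))) := by
              rw [hn, hnat, mul_assoc]
      have := le_of_mul_le_mul_left (by
        calc ((s:ℝ)+1) * ∑ S ∈ A.powersetCard (s+1),
            Real.exp (u * ((∑ i ∈ S, y i) - ((s:ℝ)+1) * μ)) ≤ _ := hgoal) hplus
      push_cast
      exact this



open Classical in
lemma tail_bound {T : ℕ} (s : ℕ) (hsT : s ≤ T) (y : Fin T → ℝ)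
    (hy : ∀ i, y i ∈ Set.Icc (0:ℝ) 1) (u cst : ℝ)
    (E : Finset (Finset (Fin T))) (hE : E ⊆ Finset.univ.powersetCard s)
    (hlow : ∀ S ∈ E, cst ≤ u * ((∑ i ∈ S, y i) - (s:ℝ) * ((∑ i, y i)/(T:ℝ)))) :
    (E.card : ℝ) ≤ (T.choose s : ℝ) * Real.exp ((s:ℝ) * (u^2/8) - cst) := by
  have hcu : ((Finset.univ : Finset (Fin T)).card : ℝ) = (T:ℝ) := by
    rw [Finset.card_univ, Fintype.card_fin]
  have h1 : (E.card : ℝ) * Real.exp cst ≤ (T.choose s : ℝ) * Real.exp ((s:ℝ) * (u^2/8)) := by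
    calc (E.card:ℝ) * Real.exp cst = ∑ _S ∈ E, Real.exp cst := by
          rw [Finset.sum_const, nsmul_eq_mul]
      _ ≤ ∑ S ∈ E, Real.exp (u * ((∑ i ∈ S, y i) - (s:ℝ) * ((∑ i, y i)/(T:ℝ)))) :=
          Finset.sum_le_sum fun S hS => Real.exp_le_exp.2 (hlow S hS)
      _ ≤ ∑ S ∈ Finset.univ.powersetCard s,
            Real.exp (u * ((∑ i ∈ S, y i) - (s:ℝ) * ((∑ i, y i)/(T:ℝ)))) :=
          Finset.sum_le_sum_of_subset_of_nonneg hE (fun _ _ _ => (Real.exp_pos _).le)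
      _ ≤ ((Finset.univ : Finset (Fin T)).card.choose s : ℝ) * Real.exp ((s:ℝ) * (u^2/8)) := by
          have := mgf_induct y hy u s (Finset.univ) (by
            rw [Finset.card_univ, Fintype.card_fin]; exact hsT)
          rw [hcu] at this
          exact this
      _ = (T.choose s : ℝ) * Real.exp ((s:ℝ) * (u^2/8)) := by
          rw [Finset.card_univ, Fintype.card_fin]
  rw [Real.exp_sub, ← mul_div_assoc, le_div_iff₀ (Real.exp_pos cst)]
  exact h1

open Classical in
theorem stmt5 (T s : ℕ) (hs : 0 < s) (hsT : s ≤ T)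
    (y : Fin T → ℝ) (hy : ∀ i, y i ∈ Set.Icc (0 : ℝ) 1)
    (lam : ℝ) (hlam : 0 < lam) :
    (((Finset.univ.powersetCard s).filter
        (fun S : Finset (Fin T) =>
          lam ≤ |(∑ i ∈ S, y i) / (s : ℝ) - (∑ i, y i) / (T : ℝ)|)).card : ℝ)
      / ((Finset.univ.powersetCard s : Finset (Finset (Fin T))).card : ℝ)
    ≤ 2 * Real.exp (-(s : ℝ) * lam ^ 2) := by
  have hspos : (0:ℝ) < (s:ℝ) := by exact_mod_cast hs
  have hN : (((Finset.univ.powersetCard s : Finset (Finset (Fin T)))).card : ℝ)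
      = (T.choose s : ℝ) := by
    rw [Finset.card_powersetCard, Finset.card_univ, Fintype.card_fin]
  have hNpos : (0:ℝ) < (T.choose s : ℝ) := by exact_mod_cast Nat.choose_pos hsT
  rw [hN, div_le_iff₀ hNpos]
  set μ : ℝ := (∑ i, y i) / (T:ℝ) with hμ
  set Ep := (Finset.univ.powersetCard s).filter
    (fun S : Finset (Fin T) => lam ≤ (∑ i ∈ S, y i)/(s:ℝ) - μ) with hEp
  set Em := (Finset.univ.powersetCard s).filter
    (fun S : Finset (Fin T) => (∑ i ∈ S, y i)/(s:ℝ) - μ ≤ -lam) with hEm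
  have hsub : (Finset.univ.powersetCard s).filter
      (fun S : Finset (Fin T) => lam ≤ |(∑ i ∈ S, y i) / (s : ℝ) - (∑ i, y i) / (T : ℝ)|)
      ⊆ Ep ∪ Em := by
    intro S hS
    rw [Finset.mem_filter] at hS
    rw [Finset.mem_union, hEp, hEm, Finset.mem_filter, Finset.mem_filter]
    rcases le_abs.mp hS.2 with h | h
    · exact Or.inl ⟨hS.1, h⟩
    · right
      exact ⟨hS.1, by linarith⟩
  -- rewrite sum inside S minus s*μ
  have hrw : ∀ S : Finset (Fin T), (∑ i ∈ S, y i) - (s:ℝ) * μ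
      = (s:ℝ) * ((∑ i ∈ S, y i)/(s:ℝ) - μ) := by
    intro S
    field_simp
  have hp : (Ep.card : ℝ) ≤ (T.choose s : ℝ) * Real.exp (-(s:ℝ) * lam ^ 2) := by
    have h := tail_bound s hsT y hy (4*lam) (4*(s:ℝ)*lam^2) Ep
      (Finset.filter_subset _ _) ?_
    · calc (Ep.card:ℝ) ≤ (T.choose s : ℝ) * Real.exp ((s:ℝ)*((4*lam)^2/8) - 4*(s:ℝ)*lam^2) := h
        _ ≤ (T.choose s : ℝ) * Real.exp (-(s:ℝ) * lam ^ 2) := by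
          apply mul_le_mul_of_nonneg_left (Real.exp_le_exp.2 ?_) hNpos.le
          nlinarith [sq_nonneg lam]
    · intro S hS
      rw [hEp, Finset.mem_filter] at hS
      rw [hrw S]
      have hh := mul_le_mul_of_nonneg_left hS.2 (by positivity : (0:ℝ) ≤ 4*lam*(s:ℝ))
      nlinarith
  have hm : (Em.card : ℝ) ≤ (T.choose s : ℝ) * Real.exp (-(s:ℝ) * lam ^ 2) := by
    have h := tail_bound s hsT y hy (-(4*lam)) (4*(s:ℝ)*lam^2) Em
      (Finset.filter_subset _ _) ?_
    · calc (Em.card:ℝ) ≤ (T.choose s : ℝ) * Real.exp ((s:ℝ)*((-(4*lam))^2/8) - 4*(s:ℝ)*lam^2) := h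
        _ ≤ (T.choose s : ℝ) * Real.exp (-(s:ℝ) * lam ^ 2) := by
          apply mul_le_mul_of_nonneg_left (Real.exp_le_exp.2 ?_) hNpos.le
          nlinarith [sq_nonneg lam]
    · intro S hS
      rw [hEm, Finset.mem_filter] at hS
      rw [hrw S]
      have hh := mul_le_mul_of_nonneg_left hS.2 (by positivity : (0:ℝ) ≤ 4*lam*(s:ℝ))
      nlinarith
  have hcard : ((((Finset.univ.powersetCard s).filter
      (fun S : Finset (Fin T) =>
        lam ≤ |(∑ i ∈ S, y i) / (s : ℝ) - (∑ i, y i) / (T : ℝ)|)).card : ℝ))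
      ≤ (Ep.card : ℝ) + (Em.card : ℝ) := by
    have h1 := Finset.card_le_card hsub
    have h2 := Finset.card_union_le Ep Em
    have := h1.trans h2
    exact_mod_cast this
  calc ((((Finset.univ.powersetCard s).filter
      (fun S : Finset (Fin T) =>
        lam ≤ |(∑ i ∈ S, y i) / (s : ℝ) - (∑ i, y i) / (T : ℝ)|)).card : ℝ))
      ≤ (Ep.card : ℝ) + (Em.card : ℝ) := hcard
    _ ≤ 2 * Real.exp (-(s:ℝ) * lam ^ 2) * (T.choose s : ℝ) := by linarith
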